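/- Let N ≥ 1, let t_0 < t_1 < ⋯ < t_N be real numbers, let T_max = max_{0 ≤ n ≤ N−1} (t_{n+1} − t_n), and let f : ℝ → ℝ be continuously differentiable on [t_0, t_N]. For each n let s_n = (t_n + t_{n+1})/2. Then Σ_{n=0}^{N−1} ∫_{t_n}^{t_{n+1}} (f(t) − f(s_n))² dt ≤ (T_max²/π²) · ∫_{t_0}^{t_N} f′(t)² dt. -/

import Mathlib

open MeasureTheory intervalIntegral Real

set_option maxHeartbeats 1000000

open Set

/-- Half-interval Wirtinger: if `g a = 0` then `∫ g² ≤ (2(b-a)/π)² ∫ g'²`. -/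
lemma halfwirt (a b : ℝ) (hab : a < b) (g g' : ℝ → ℝ)
    (hg : ∀ x ∈ Icc a b, HasDerivAt g (g' x) x)
    (hc : ContinuousOn g' (Icc a b)) (h0 : g a = 0) :
    ∫ x in a..b, g x ^ 2 ≤ (2 * (b - a) / π) ^ 2 * ∫ x in a..b, g' x ^ 2 := by
  have hba : (0:ℝ) < b - a := by linarith
  set k : ℝ := π / (2 * (b - a)) with hkdef
  have hπ : (0:ℝ) < π := Real.pi_pos
  have hk : 0 < k := by positivity
  have hkb : k * (b - a) = π / 2 := by rw [hkdef]; field_simp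
  have gcont : ContinuousOn g (Icc a b) := fun x hx => (hg x hx).continuousAt.continuousWithinAt
  -- bounds
  obtain ⟨M0, hM0⟩ := isCompact_Icc.exists_bound_of_continuousOn hc
  set M : ℝ := max M0 0 with hMdef
  have hM : ∀ x ∈ Icc a b, |g' x| ≤ M := fun x hx => le_trans (hM0 x hx) (le_max_left _ _)
  have hMnn : 0 ≤ M := le_max_right _ _
  obtain ⟨C0, hC0⟩ := isCompact_Icc.exists_bound_of_continuousOn gcont
  set C : ℝ := max C0 0 with hCdef
  have hC : ∀ x ∈ Icc a b, |g x| ≤ C := fun x hx => le_trans (hC0 x hx) (le_max_left _ _)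
  have hCnn : 0 ≤ C := le_max_right _ _
  -- the auxiliary weight
  set w : ℝ → ℝ := fun x => k * (Real.cos (k * (x - a)) / Real.sin (k * (x - a))) with hwdef
  -- main estimate with cutoff a' ∈ (a, b]
  have main : ∀ a' ∈ Ioc a b, k ^ 2 * ∫ x in a..b, g x ^ 2 ≤
      (∫ x in a..b, g' x ^ 2) + (k ^ 2 * C ^ 2 + M ^ 2) * (a' - a) := by
    intro a' ha'
    obtain ⟨ha'l, ha'r⟩ := ha'
    have ha'ab : a' ∈ Icc a b := ⟨le_of_lt ha'l, ha'r⟩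
    have hsub : Icc a' b ⊆ Icc a b := Icc_subset_Icc (le_of_lt ha'l) le_rfl
    -- positivity of sin on [a', b]
    have hsin : ∀ x ∈ Icc a' b, 0 < Real.sin (k * (x - a)) := by
      intro x hx
      apply Real.sin_pos_of_pos_of_lt_pi
      · have : 0 < x - a := by linarith [hx.1]
        positivity
      · have h1 : k * (x - a) ≤ k * (b - a) := by
          apply mul_le_mul_of_nonneg_left _ (le_of_lt hk); linarith [hx.2]
        calc k * (x - a) ≤ π / 2 := by rw [← hkb]; exact h1
          _ < π := by linarith
    -- derivative of w
    have hwderiv : ∀ x ∈ Icc a' b, HasDerivAt w (-(k ^ 2 + (w x) ^ 2)) x := by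
      intro x hx
      have hs := hsin x hx
      have hsne : Real.sin (k * (x - a)) ≠ 0 := ne_of_gt hs
      have hlin : HasDerivAt (fun y => k * (y - a)) k x := by
        simpa using ((hasDerivAt_id x).sub_const a).const_mul k
      have hu : HasDerivAt (fun y => Real.cos (k * (y - a)))
          (-Real.sin (k * (x - a)) * k) x := (Real.hasDerivAt_cos _).comp x hlin
      have hv : HasDerivAt (fun y => Real.sin (k * (y - a)))
          (Real.cos (k * (x - a)) * k) x := (Real.hasDerivAt_sin _).comp x hlin
      have hd := ((hu.div hv hsne).const_mul k)
      refine hd.congr_deriv ?_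
      simp only [hwdef]
      have hpy := Real.sin_sq_add_cos_sq (k * (x - a))
      field_simp
      nlinarith [hpy]
    -- H and its derivative
    set H : ℝ → ℝ := fun x => w x * g x ^ 2 with hHdef
    set H' : ℝ → ℝ := fun x => -(k ^ 2 + (w x) ^ 2) * g x ^ 2 + w x * (2 * g x * g' x)
      with hH'def
    have hHderiv : ∀ x ∈ Icc a' b, HasDerivAt H (H' x) x := by
      intro x hx
      have hd := (hwderiv x hx).mul ((hg x (hsub hx)).pow 2)
      simp only [hHdef, hH'def]
      refine hd.congr_deriv ?_
      simp only [Pi.pow_apply]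
      ring
    -- continuity of w on Icc a' b
    have hwcont : ContinuousOn w (Icc a' b) := by
      apply ContinuousOn.mul continuousOn_const
      apply ContinuousOn.div
      · exact (Real.continuous_cos.comp (by continuity)).continuousOn
      · exact (Real.continuous_sin.comp (by continuity)).continuousOn
      · exact fun x hx => ne_of_gt (hsin x hx)
    have hgc' : ContinuousOn g (Icc a' b) := gcont.mono hsub
    have hc' : ContinuousOn g' (Icc a' b) := hc.mono hsub
    have huIcc : uIcc a' b = Icc a' b := uIcc_of_le ha'r
    -- integrability
    have hint1 : IntervalIntegrable (fun x => g x ^ 2) volume a' b :=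
      ((hgc'.pow 2).mono (by rw [huIcc])).intervalIntegrable
    have hint2 : IntervalIntegrable (fun x => g' x ^ 2) volume a' b :=
      ((hc'.pow 2).mono (by rw [huIcc])).intervalIntegrable
    have hH'cont : ContinuousOn H' (Icc a' b) := by
      apply ContinuousOn.add
      · exact (ContinuousOn.neg (continuousOn_const.add (hwcont.pow 2))).mul (hgc'.pow 2)
      · exact hwcont.mul ((continuousOn_const.mul hgc').mul hc')
    have hint3 : IntervalIntegrable H' volume a' b :=
      (hH'cont.mono (by rw [huIcc])).intervalIntegrable
    have hint4 : IntervalIntegrable (fun x => (g' x - w x * g x) ^ 2) volume a' b :=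
      (((hc'.sub (hwcont.mul hgc')).pow 2).mono (by rw [huIcc])).intervalIntegrable
    -- FTC for H
    have hFTC : ∫ x in a'..b, H' x = H b - H a' :=
      integral_eq_sub_of_hasDerivAt (fun x hx => hHderiv x (huIcc ▸ hx)) hint3
    -- pointwise identity, integrated
    have hpt : EqOn (fun x => (g' x - w x * g x) ^ 2)
        (fun x => g' x ^ 2 - k ^ 2 * g x ^ 2 - H' x) (uIcc a' b) := by
      intro x _; simp only [hH'def]; ring
    have hiden : ∫ x in a'..b, (g' x - w x * g x) ^ 2 =
        (∫ x in a'..b, g' x ^ 2) - k ^ 2 * (∫ x in a'..b, g x ^ 2) - (H b - H a') := by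
      rw [integral_congr hpt, ← hFTC, integral_sub (hint2.sub (hint1.const_mul (k^2))) hint3,
        integral_sub hint2 (hint1.const_mul (k^2)), intervalIntegral.integral_const_mul]
    have hnn : 0 ≤ ∫ x in a'..b, (g' x - w x * g x) ^ 2 :=
      integral_nonneg ha'r (fun x _ => sq_nonneg _)
    -- H b = 0
    have hHb : H b = 0 := by
      have : Real.cos (k * (b - a)) = 0 := by rw [hkb]; exact Real.cos_pi_div_two
      simp [hHdef, hwdef, this]
    -- bound on H a'
    have hga' : |g a'| ≤ M * (a' - a) := by
      have hFTCg : ∫ x in a..a', g' x = g a' - g a := by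
        apply integral_eq_sub_of_hasDerivAt
        · intro x hx
          rw [uIcc_of_le (le_of_lt ha'l)] at hx
          exact hg x (Icc_subset_Icc le_rfl ha'r hx)
        · exact ((hc.mono (Icc_subset_Icc le_rfl ha'r)).mono
            (by rw [uIcc_of_le (le_of_lt ha'l)])).intervalIntegrable
      have := intervalIntegral.norm_integral_le_of_norm_le_const (a := a) (b := a') (C := M)
        (f := g') (fun x hx => by
          rw [uIoc_of_le (le_of_lt ha'l)] at hx
          exact hM x ⟨le_of_lt hx.1, le_trans hx.2 ha'r⟩)
      rw [hFTCg, h0, sub_zero] at this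
      simpa [abs_of_pos (show (0:ℝ) < a' - a by linarith)] using this
    have hwa' : w a' ≤ 1 / (a' - a) := by
      set θ : ℝ := k * (a' - a) with hθdef
      have hθ0 : 0 < θ := mul_pos hk (by linarith)
      have hθhalf : θ ≤ π / 2 := by
        rw [← hkb, hθdef]
        apply mul_le_mul_of_nonneg_left (by linarith) (le_of_lt hk)
      have hwa : w a' = k * (Real.cos θ / Real.sin θ) := rfl
      rcases lt_or_eq_of_le hθhalf with hθπ | hθπ
      · have htan : θ < Real.tan θ := Real.lt_tan hθ0 hθπ
        have hsθ : 0 < Real.sin θ := Real.sin_pos_of_pos_of_lt_pi hθ0 (by linarith)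
        have hcθ : 0 < Real.cos θ := Real.cos_pos_of_mem_Ioo ⟨by linarith, hθπ⟩
        have hlt : Real.cos θ / Real.sin θ < 1 / θ := by
          rw [div_lt_div_iff₀ hsθ hθ0]
          rw [Real.tan_eq_sin_div_cos, lt_div_iff₀ hcθ] at htan
          linarith
        rw [hwa]
        calc k * (Real.cos θ / Real.sin θ) ≤ k * (1 / θ) := by
              apply mul_le_mul_of_nonneg_left (le_of_lt hlt) (le_of_lt hk)
          _ = 1 / (a' - a) := by
              rw [hθdef]
              rw [one_div, one_div, mul_inv, ← mul_assoc,
                mul_inv_cancel₀ (ne_of_gt hk), one_mul]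
      · rw [hwa, hθπ, Real.cos_pi_div_two, zero_div, mul_zero]
        exact le_of_lt (div_pos one_pos (by linarith))
    have hHa' : H a' ≤ M ^ 2 * (a' - a) := by
      have h1 : g a' ^ 2 ≤ (M * (a' - a)) ^ 2 := by
        rw [← sq_abs]; exact pow_le_pow_left₀ (abs_nonneg _) hga' 2
      have h2 : H a' = w a' * g a' ^ 2 := rfl
      rw [h2]
      calc w a' * g a' ^ 2 ≤ (1 / (a' - a)) * g a' ^ 2 := by
            apply mul_le_mul_of_nonneg_right hwa' (sq_nonneg _)
        _ ≤ (1 / (a' - a)) * (M * (a' - a)) ^ 2 := by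
            apply mul_le_mul_of_nonneg_left h1 (le_of_lt (div_pos one_pos (by linarith)))
        _ = M ^ 2 * (a' - a) := by
            have hne : a' - a ≠ 0 := ne_of_gt (by linarith)
            field_simp
    -- split integrals over [a,a'] and [a',b]
    have hint1' : IntervalIntegrable (fun x => g x ^ 2) volume a a' :=
      (((gcont.pow 2).mono (Icc_subset_Icc le_rfl ha'r)).mono
        (by rw [uIcc_of_le (le_of_lt ha'l)])).intervalIntegrable
    have hint2' : IntervalIntegrable (fun x => g' x ^ 2) volume a a' :=
      (((hc.pow 2).mono (Icc_subset_Icc le_rfl ha'r)).mono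
        (by rw [uIcc_of_le (le_of_lt ha'l)])).intervalIntegrable
    have hsplit1 : ∫ x in a..b, g x ^ 2 =
        (∫ x in a..a', g x ^ 2) + ∫ x in a'..b, g x ^ 2 :=
      (integral_add_adjacent_intervals hint1' hint1).symm
    have hsplit2 : ∫ x in a..b, g' x ^ 2 =
        (∫ x in a..a', g' x ^ 2) + ∫ x in a'..b, g' x ^ 2 :=
      (integral_add_adjacent_intervals hint2' hint2).symm
    have hleft : ∫ x in a..a', g x ^ 2 ≤ C ^ 2 * (a' - a) := by
      have := intervalIntegral.norm_integral_le_of_norm_le_const (a := a) (b := a')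
        (C := C ^ 2) (f := fun x => g x ^ 2) (fun x hx => by
          rw [uIoc_of_le (le_of_lt ha'l)] at hx
          have := hC x ⟨le_of_lt hx.1, le_trans hx.2 ha'r⟩
          rw [Real.norm_eq_abs, abs_of_nonneg (sq_nonneg _)]
          calc g x ^ 2 = |g x| ^ 2 := (sq_abs _).symm
            _ ≤ C ^ 2 := pow_le_pow_left₀ (abs_nonneg _) this 2)
      rw [abs_of_pos (show (0:ℝ) < a' - a by linarith)] at this
      exact le_trans (le_abs_self _) this
    have hleft2 : 0 ≤ ∫ x in a..a', g' x ^ 2 :=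
      integral_nonneg (le_of_lt ha'l) (fun x _ => sq_nonneg _)
    -- combine
    have hkey : k ^ 2 * ∫ x in a'..b, g x ^ 2 ≤ (∫ x in a'..b, g' x ^ 2) + M ^ 2 * (a' - a) := by
      nlinarith [hnn, hiden, hHb, hHa']
    calc k ^ 2 * ∫ x in a..b, g x ^ 2
        = k ^ 2 * (∫ x in a..a', g x ^ 2) + k ^ 2 * (∫ x in a'..b, g x ^ 2) := by
          rw [hsplit1]; ring
      _ ≤ k ^ 2 * (C ^ 2 * (a' - a)) + ((∫ x in a'..b, g' x ^ 2) + M ^ 2 * (a' - a)) := by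
          apply add_le_add _ hkey
          exact mul_le_mul_of_nonneg_left hleft (by positivity)
      _ ≤ (∫ x in a..b, g' x ^ 2) + (k ^ 2 * C ^ 2 + M ^ 2) * (a' - a) := by
          rw [hsplit2]; nlinarith [hleft2]
  -- take the limit a' → a
  have hlim : k ^ 2 * ∫ x in a..b, g x ^ 2 ≤ ∫ x in a..b, g' x ^ 2 := by
    apply le_of_forall_pos_le_add
    intro ε hε
    set K : ℝ := k ^ 2 * C ^ 2 + M ^ 2 + 1 with hKdef
    have hK : 0 < K := by positivity
    set δ : ℝ := min (ε / K) (b - a) with hδdef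
    have hδ0 : 0 < δ := lt_min (by positivity) hba
    have := main (a + δ) ⟨by linarith, by
      have : δ ≤ b - a := min_le_right _ _; linarith⟩
    have hKδ : (k ^ 2 * C ^ 2 + M ^ 2) * (a + δ - a) ≤ ε := by
      have h1 : δ ≤ ε / K := min_le_left _ _
      have h2 : (k ^ 2 * C ^ 2 + M ^ 2) * δ ≤ K * δ := by
        apply mul_le_mul_of_nonneg_right _ (le_of_lt hδ0)
        rw [hKdef]; linarith
      have h3 : K * δ ≤ K * (ε / K) := mul_le_mul_of_nonneg_left h1 (le_of_lt hK)
      have h4 : K * (ε / K) = ε := by field_simp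
      calc (k ^ 2 * C ^ 2 + M ^ 2) * (a + δ - a) = (k ^ 2 * C ^ 2 + M ^ 2) * δ := by ring_nf
        _ ≤ ε := by linarith
    linarith
  -- conclude
  have hk2 : (2 * (b - a) / π) ^ 2 = 1 / k ^ 2 := by
    rw [hkdef]; field_simp
  rw [hk2]
  rw [div_mul_eq_mul_div, le_div_iff₀ (by positivity)]
  calc (∫ x in a..b, g x ^ 2) * k ^ 2 = k ^ 2 * ∫ x in a..b, g x ^ 2 := by ring
    _ ≤ ∫ x in a..b, g' x ^ 2 := hlim
    _ = 1 * ∫ x in a..b, g' x ^ 2 := by ring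

/-- Reflected half-interval Wirtinger: if `g b = 0`. -/
lemma halfwirt' (a b : ℝ) (hab : a < b) (g g' : ℝ → ℝ)
    (hg : ∀ x ∈ Icc a b, HasDerivAt g (g' x) x)
    (hc : ContinuousOn g' (Icc a b)) (h0 : g b = 0) :
    ∫ x in a..b, g x ^ 2 ≤ (2 * (b - a) / π) ^ 2 * ∫ x in a..b, g' x ^ 2 := by
  have hneg : ∀ x ∈ Icc (-b) (-a), HasDerivAt (fun y => g (-y)) (-g' (-x)) x := by
    intro x hx
    have hx' : -x ∈ Icc a b := ⟨by linarith [hx.2], by linarith [hx.1]⟩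
    have := (hg (-x) hx').comp x (hasDerivAt_neg x)
    simpa [Function.comp_def] using this
  have hcneg : ContinuousOn (fun x => -g' (-x)) (Icc (-b) (-a)) := by
    apply ContinuousOn.neg
    apply hc.comp continuous_neg.continuousOn
    intro x hx
    simp only [Set.mem_Icc] at hx ⊢
    constructor <;> [linarith [hx.2]; linarith [hx.1]]
  have h := halfwirt (-b) (-a) (by linarith) (fun y => g (-y)) (fun y => -g' (-y))
    hneg hcneg (by simpa using h0)
  have e1 : (∫ x in (-b)..(-a), g (-x) ^ 2) = ∫ x in a..b, g x ^ 2 := by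
    have := intervalIntegral.integral_comp_neg (a := -b) (b := -a) (fun x => g x ^ 2)
    simpa using this
  have e2 : (∫ x in (-b)..(-a), (-g' (-x)) ^ 2) = ∫ x in a..b, g' x ^ 2 := by
    have : ∀ x, (-g' (-x)) ^ 2 = (fun y => g' y ^ 2) (-x) := by intro x; simp
    have h2 := intervalIntegral.integral_comp_neg (a := -b) (b := -a) (fun y => g' y ^ 2)
    simp only [neg_neg] at h2
    calc (∫ x in (-b)..(-a), (-g' (-x)) ^ 2)
        = ∫ x in (-b)..(-a), g' (-x) ^ 2 := by simp only [neg_sq]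
      _ = ∫ x in a..b, g' x ^ 2 := h2
  rw [e1, e2] at h
  have e3 : (2 * (-a - -b) / π) ^ 2 = (2 * (b - a) / π) ^ 2 := by ring_nf
  rw [e3] at h
  exact h

/-- Midpoint Wirtinger on a single interval. -/
lemma midwirt (a b : ℝ) (hab : a < b) (f f' : ℝ → ℝ)
    (hf : ∀ x ∈ Icc a b, HasDerivAt f (f' x) x)
    (hc : ContinuousOn f' (Icc a b)) :
    ∫ x in a..b, (f x - f ((a + b) / 2)) ^ 2
      ≤ ((b - a) / π) ^ 2 * ∫ x in a..b, f' x ^ 2 := by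
  set c : ℝ := (a + b) / 2 with hcdef
  have hac : a < c := by rw [hcdef]; linarith
  have hcb : c < b := by rw [hcdef]; linarith
  set g : ℝ → ℝ := fun x => f x - f c with hgdef
  have hg : ∀ x ∈ Icc a b, HasDerivAt g (f' x) x := fun x hx => (hf x hx).sub_const _
  have hg1 : ∀ x ∈ Icc a c, HasDerivAt g (f' x) x :=
    fun x hx => hg x (Icc_subset_Icc le_rfl (le_of_lt hcb) hx)
  have hg2 : ∀ x ∈ Icc c b, HasDerivAt g (f' x) x :=
    fun x hx => hg x (Icc_subset_Icc (le_of_lt hac) le_rfl hx)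
  have hc1 : ContinuousOn f' (Icc a c) := hc.mono (Icc_subset_Icc le_rfl (le_of_lt hcb))
  have hc2 : ContinuousOn f' (Icc c b) := hc.mono (Icc_subset_Icc (le_of_lt hac) le_rfl)
  have h0 : g c = 0 := by simp [hgdef]
  have h1 := halfwirt' a c hac g f' hg1 hc1 h0
  have h2 := halfwirt c b hcb g f' hg2 hc2 h0
  have hca : (2 * (c - a) / π) ^ 2 = ((b - a) / π) ^ 2 := by rw [hcdef]; ring_nf
  have hbc : (2 * (b - c) / π) ^ 2 = ((b - a) / π) ^ 2 := by rw [hcdef]; ring_nf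
  rw [hca] at h1; rw [hbc] at h2
  -- integrability for splitting
  have gcont : ContinuousOn g (Icc a b) := fun x hx => (hg x hx).continuousAt.continuousWithinAt
  have hint1 : IntervalIntegrable (fun x => g x ^ 2) volume a c :=
    (((gcont.pow 2).mono (Icc_subset_Icc le_rfl (le_of_lt hcb))).mono
      (by rw [uIcc_of_le (le_of_lt hac)])).intervalIntegrable
  have hint2 : IntervalIntegrable (fun x => g x ^ 2) volume c b :=
    (((gcont.pow 2).mono (Icc_subset_Icc (le_of_lt hac) le_rfl)).mono
      (by rw [uIcc_of_le (le_of_lt hcb)])).intervalIntegrable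
  have hint3 : IntervalIntegrable (fun x => f' x ^ 2) volume a c :=
    ((hc1.pow 2).mono (by rw [uIcc_of_le (le_of_lt hac)])).intervalIntegrable
  have hint4 : IntervalIntegrable (fun x => f' x ^ 2) volume c b :=
    ((hc2.pow 2).mono (by rw [uIcc_of_le (le_of_lt hcb)])).intervalIntegrable
  have hsplitg : ∫ x in a..b, g x ^ 2 = (∫ x in a..c, g x ^ 2) + ∫ x in c..b, g x ^ 2 :=
    (integral_add_adjacent_intervals hint1 hint2).symm
  have hsplitf : ∫ x in a..b, f' x ^ 2 = (∫ x in a..c, f' x ^ 2) + ∫ x in c..b, f' x ^ 2 :=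
    (integral_add_adjacent_intervals hint3 hint4).symm
  have : ∫ x in a..b, (f x - f c) ^ 2 = ∫ x in a..b, g x ^ 2 := rfl
  rw [this, hsplitg, hsplitf]
  nlinarith [h1, h2]

/-- Summed midpoint Wirtinger bound over a strictly increasing family of sampling
instants, with `Tmax` the largest inter-sample gap. -/
theorem summed_wirtinger_bound
    (N : ℕ) (hN : 1 ≤ N) (t : ℕ → ℝ)
    (ht : ∀ n < N, t n < t (n + 1))
    (Tmax : ℝ)
    (hT : Tmax = (Finset.range N).sup' (Finset.nonempty_range_iff.mpr (by omega))
      (fun n => t (n + 1) - t n))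
    (f f' : ℝ → ℝ)
    (hderiv : ∀ x ∈ Set.Icc (t 0) (t N), HasDerivAt f (f' x) x)
    (hcont : ContinuousOn f' (Set.Icc (t 0) (t N))) :
    ∑ n ∈ Finset.range N,
        ∫ x in (t n)..(t (n + 1)), (f x - f ((t n + t (n + 1)) / 2)) ^ 2
      ≤ (Tmax ^ 2 / π ^ 2) * ∫ x in (t 0)..(t N), (f' x) ^ 2 := by
  have hπ : (0:ℝ) < π := Real.pi_pos
  have hmono : ∀ j, ∀ i ≤ j, j ≤ N → t i ≤ t j := by
    intro j
    induction j with
    | zero => intro i hi _; interval_cases i; exact le_rfl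
    | succ m ih =>
      intro i hi hjN
      rcases Nat.lt_succ_iff_lt_or_eq.mp (Nat.lt_succ_of_le hi) with h | h
      · exact le_trans (ih i (Nat.lt_succ_iff.mp h) (by omega))
          (le_of_lt (ht m (by omega)))
      · rw [h]
  have hTle : ∀ n < N, t (n + 1) - t n ≤ Tmax := by
    intro n hn
    rw [hT]
    exact Finset.le_sup' (fun n => t (n + 1) - t n) (Finset.mem_range.mpr hn)
  have hIcc : ∀ n < N, Set.Icc (t n) (t (n + 1)) ⊆ Set.Icc (t 0) (t N) := by
    intro n hn
    apply Icc_subset_Icc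
    · exact hmono n 0 (Nat.zero_le _) (by omega)
    · exact hmono N (n + 1) (by omega) le_rfl
  have step : ∀ n ∈ Finset.range N,
      (∫ x in (t n)..(t (n + 1)), (f x - f ((t n + t (n + 1)) / 2)) ^ 2)
        ≤ (Tmax ^ 2 / π ^ 2) * ∫ x in (t n)..(t (n + 1)), f' x ^ 2 := by
    intro n hn
    rw [Finset.mem_range] at hn
    have h := midwirt (t n) (t (n + 1)) (ht n hn) f f'
      (fun x hx => hderiv x (hIcc n hn hx)) (hcont.mono (hIcc n hn))
    refine le_trans h ?_
    apply mul_le_mul_of_nonneg_right _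
      (integral_nonneg (le_of_lt (ht n hn)) fun x _ => sq_nonneg _)
    rw [div_pow]
    gcongr
    · linarith [ht n hn]
    · exact hTle n hn
  have hintadj : ∀ k < N, IntervalIntegrable (fun x => f' x ^ 2) volume (t k) (t (k + 1)) := by
    intro k hk
    apply ContinuousOn.intervalIntegrable
    apply (hcont.pow 2).mono
    rw [uIcc_of_le (le_of_lt (ht k hk))]
    exact hIcc k hk
  calc ∑ n ∈ Finset.range N,
        ∫ x in (t n)..(t (n + 1)), (f x - f ((t n + t (n + 1)) / 2)) ^ 2
      ≤ ∑ n ∈ Finset.range N, (Tmax ^ 2 / π ^ 2) * ∫ x in (t n)..(t (n + 1)), f' x ^ 2 :=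
        Finset.sum_le_sum step
    _ = (Tmax ^ 2 / π ^ 2) * ∑ n ∈ Finset.range N, ∫ x in (t n)..(t (n + 1)), f' x ^ 2 := by
        rw [Finset.mul_sum]
    _ = (Tmax ^ 2 / π ^ 2) * ∫ x in (t 0)..(t N), f' x ^ 2 := by
        rw [intervalIntegral.sum_integral_adjacent_intervals hintadj]
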